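/- The bias of the doubly robust estimator V̂_DR = (1/n) Σ_{k=1}^n V̂_k satisfies |E_μ[V̂_DR] − V| = (1/n)| E_μ[ Σ_{k=1}^n E_{(x,a)∼ν}[ (1 − ρ_k(x,a))·Δ(x,a) ] ] |, where V = E_ν[r]. Moreover, if the exploration policy and the propensity estimator are stationary (μ_k = μ_1, μ̂_k = μ̂_1 for all k), this simplifies to |E_μ[V̂_DR] − V| = | E_{(x,a)∼ν}[ (1 − ρ_1(x,a))·Δ(x,a) ] |. -/

import Mathlib

set_option linter.unusedSectionVars false
set_option linter.unusedVariables false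

open Finset

section aux
variable {S : Type*} [Fintype S]

def DRsnocEquiv (S : Type*) (n : ℕ) : ((Fin n → S) × S) ≃ (Fin (n+1) → S) where
  toFun p := Fin.snoc p.1 p.2
  invFun z := (Fin.init z, z (Fin.last n))
  left_inv p := by simp [Fin.init_snoc, Fin.snoc_last]
  right_inv z := by simp [Fin.snoc_init_self]

lemma DRsum_snoc {n : ℕ} (f : (Fin (n+1) → S) → ℝ) :
    ∑ z : Fin (n+1) → S, f z = ∑ y : Fin n → S, ∑ s : S, f (Fin.snoc y s) := by
  have h := Fintype.sum_equiv (DRsnocEquiv S n) (fun p => f (Fin.snoc p.1 p.2)) f (fun p => rfl)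
  rw [← h, Fintype.sum_prod_type]

/-- product of adaptive weights -/
def DRprodW (n : ℕ) (w : (k : ℕ) → (Fin k → S) → S → ℝ) (z : Fin n → S) : ℝ :=
  ∏ k : Fin n, w k.1 (fun i => z ⟨i.1, i.isLt.trans k.isLt⟩) (z k)

lemma DRprodW_snoc (n : ℕ) (w : (k : ℕ) → (Fin k → S) → S → ℝ)
    (y : Fin n → S) (s : S) :
    DRprodW (n+1) w (Fin.snoc y s) = DRprodW n w y * w n y s := by
  unfold DRprodW
  rw [Fin.prod_univ_castSucc]
  congr 1
  · apply Finset.prod_congr rfl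
    intro k _
    have h1 : ∀ i : Fin (Fin.castSucc k).1, (Fin.snoc y s : Fin (n+1) → S) ⟨i.1, i.isLt.trans (Fin.castSucc k).isLt⟩ = y ⟨i.1, i.isLt.trans k.isLt⟩ := by
      intro i
      have : (⟨i.1, i.isLt.trans (Fin.castSucc k).isLt⟩ : Fin (n+1)) = Fin.castSucc ⟨i.1, i.isLt.trans k.isLt⟩ := rfl
      rw [this, Fin.snoc_castSucc]
    have h2 : (Fin.snoc y s : Fin (n+1) → S) (Fin.castSucc k) = y k := by simp
    simp only [h2]
    congr 1
    exact funext h1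
  · have h1 : ∀ i : Fin (Fin.last n).1, (Fin.snoc y s : Fin (n+1) → S) ⟨i.1, i.isLt.trans (Fin.last n).isLt⟩ = y ⟨i.1, i.isLt⟩ := by
      intro i
      have : (⟨i.1, i.isLt.trans (Fin.last n).isLt⟩ : Fin (n+1)) = Fin.castSucc ⟨i.1, i.isLt⟩ := rfl
      rw [this, Fin.snoc_castSucc]
    have h2 : (Fin.snoc y s : Fin (n+1) → S) (Fin.last n) = s := by simp
    rw [h2]
    congr 1
    exact funext fun i => (h1 i).trans (by congr)

lemma DRprodW_sum (n : ℕ) (w : (k : ℕ) → (Fin k → S) → S → ℝ)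
    (hw : ∀ k h, ∑ s : S, w k h s = 1) :
    ∑ z : Fin n → S, DRprodW n w z = 1 := by
  induction n with
  | zero => simp [DRprodW]
  | succ n ih =>
    rw [DRsum_snoc]
    simp only [DRprodW_snoc]
    calc ∑ y : Fin n → S, ∑ s : S, DRprodW n w y * w n y s
        = ∑ y : Fin n → S, DRprodW n w y * ∑ s : S, w n y s := by
          simp [Finset.mul_sum]
      _ = 1 := by simp [hw, ih]

lemma DRres_snoc {n : ℕ} (y : Fin n → S) (s : S) (m : ℕ) (hm : m ≤ n)
    (p : ∀ i : Fin m, i.1 < n + 1) (q : ∀ i : Fin m, i.1 < n) :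
    (fun i : Fin m => (Fin.snoc y s : Fin (n+1) → S) ⟨i.1, p i⟩)
      = fun i => y ⟨i.1, q i⟩ := by
  funext i
  have : (⟨i.1, p i⟩ : Fin (n+1)) = Fin.castSucc ⟨i.1, q i⟩ := rfl
  rw [this, Fin.snoc_castSucc]

lemma DRpull (w : (k : ℕ) → (Fin k → S) → S → ℝ)
    (hw : ∀ k h, ∑ s : S, w k h s = 1) :
    ∀ (n : ℕ) (m : Fin n) (φ : (Fin m.1 → S) → S → ℝ),
    ∑ z : Fin n → S, DRprodW n w z * φ (fun i => z ⟨i.1, i.isLt.trans m.isLt⟩) (z m)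
    = ∑ z : Fin n → S, DRprodW n w z *
        ∑ s : S, w m.1 (fun i => z ⟨i.1, i.isLt.trans m.isLt⟩) s *
          φ (fun i => z ⟨i.1, i.isLt.trans m.isLt⟩) s := by
  intro n
  induction n with
  | zero => exact fun m => absurd m.isLt (Nat.not_lt_zero _)
  | succ n ih =>
    intro m φ
    rw [DRsum_snoc, DRsum_snoc]
    induction m using Fin.lastCases with
    | last =>
      have key : ∀ y : Fin n → S, (∑ s : S, (DRprodW n w y * w n y s) *
            φ (fun i : Fin n => y i) s)
          = ∑ s : S, (DRprodW n w y * w n y s) *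
              ∑ t : S, w n (fun i : Fin n => y i) t * φ (fun i : Fin n => y i) t := by
        intro y
        rw [← Finset.sum_mul]
        rw [show (∑ s : S, DRprodW n w y * w n y s) = DRprodW n w y by
          rw [← Finset.mul_sum, hw, mul_one]]
        rw [Finset.mul_sum]
        apply Finset.sum_congr rfl
        intro s _
        ring
      refine Finset.sum_congr rfl (fun y _ => ?_)
      have h1 : ∀ s : S, (fun i : Fin (Fin.last n).1 =>
          (Fin.snoc y s : Fin (n+1) → S) ⟨i.1, i.isLt.trans (Fin.last n).isLt⟩)
          = fun i : Fin n => y i := by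
        intro s
        exact DRres_snoc y s n le_rfl _ (fun i => i.isLt)
      calc ∑ s : S, DRprodW (n+1) w (Fin.snoc y s) *
              φ (fun i => (Fin.snoc y s : Fin (n+1) → S) ⟨i.1, i.isLt.trans (Fin.last n).isLt⟩)
                ((Fin.snoc y s : Fin (n+1) → S) (Fin.last n))
          = ∑ s : S, (DRprodW n w y * w n y s) * φ (fun i : Fin n => y i) s := by
            refine Finset.sum_congr rfl (fun s _ => ?_)
            rw [DRprodW_snoc, h1 s, Fin.snoc_last]
        _ = ∑ s : S, (DRprodW n w y * w n y s) *
              ∑ t : S, w n (fun i : Fin n => y i) t * φ (fun i : Fin n => y i) t := key y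
        _ = _ := by
            refine Finset.sum_congr rfl (fun s _ => ?_)
            rw [DRprodW_snoc, h1 s]
            rfl
    | cast m' =>
      have h1 : ∀ (y : Fin n → S) (s : S),
          (fun i : Fin (Fin.castSucc m').1 =>
            (Fin.snoc y s : Fin (n+1) → S) ⟨i.1, i.isLt.trans (Fin.castSucc m').isLt⟩)
          = fun i => y ⟨i.1, i.isLt.trans m'.isLt⟩ := fun y s =>
        DRres_snoc y s m'.1 m'.isLt.le _ _
      have step : ∀ (ψ : (Fin m'.1 → S) → S → ℝ),
          (∑ y : Fin n → S, ∑ s : S, DRprodW (n+1) w (Fin.snoc y s) *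
              ψ (fun i => (Fin.snoc y s : Fin (n+1) → S) ⟨i.1, i.isLt.trans (Fin.castSucc m').isLt⟩)
                ((Fin.snoc y s : Fin (n+1) → S) (Fin.castSucc m')))
          = ∑ y : Fin n → S, DRprodW n w y *
              ψ (fun i => y ⟨i.1, i.isLt.trans m'.isLt⟩) (y m') := by
        intro ψ
        refine Finset.sum_congr rfl fun y _ => ?_
        have e : ∀ s : S, DRprodW (n+1) w (Fin.snoc y s) *
              ψ (fun i => (Fin.snoc y s : Fin (n+1) → S) ⟨i.1, i.isLt.trans (Fin.castSucc m').isLt⟩)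
                ((Fin.snoc y s : Fin (n+1) → S) (Fin.castSucc m'))
            = (DRprodW n w y * w n y s) *
              ψ (fun i => y ⟨i.1, i.isLt.trans m'.isLt⟩) (y m') := by
          intro s
          rw [DRprodW_snoc, Fin.snoc_castSucc]
          congr 1
          refine congrArg (fun h => ψ h (y m')) (funext fun i => ?_)
          rw [show (⟨i.1, i.isLt.trans (Fin.castSucc m').isLt⟩ : Fin (n+1))
              = Fin.castSucc ⟨i.1, i.isLt.trans m'.isLt⟩ from rfl,
            Fin.snoc_castSucc]
        rw [Finset.sum_congr rfl (fun s _ => e s), ← Finset.sum_mul,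
          ← Finset.mul_sum, hw, mul_one]
      exact (step φ).trans ((ih m' φ).trans
        (step (fun h _ => ∑ t : S, w m'.1 h t * φ h t)).symm)

end aux

lemma DRcore {X A R : Type*} [Fintype X] [Fintype A] [Fintype R]
    (D : X → ℝ) (nu : X → A → ℝ) (Dr : X → A → R → ℝ) (rval : R → ℝ)
    (rhat : X → A → ℝ) (m mh : X → A → ℝ) (rstar : X → A → ℝ)
    (hrstar : ∀ x a, rstar x a = ∑ r, Dr x a r * rval r)
    (hm1 : ∀ x, ∑ a, m x a = 1) (hDr1 : ∀ x a, ∑ r, Dr x a r = 1)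
    (V : ℝ) (hV : V = ∑ x, ∑ a, ∑ r, D x * (nu x a * (Dr x a r * rval r))) :
    (∑ x, ∑ a, ∑ r, (D x * (m x a * Dr x a r)) *
        ((∑ a', nu x a' * rhat x a') + (nu x a / mh x a) * (rval r - rhat x a)))
    = V + ∑ x, ∑ a, D x * (nu x a * ((1 - m x a / mh x a) * (rhat x a - rstar x a))) := by
  have hVx : V = ∑ x, ∑ a, D x * (nu x a * rstar x a) := by
    rw [hV]
    refine Finset.sum_congr rfl fun x _ => Finset.sum_congr rfl fun a _ => ?_
    rw [hrstar, Finset.mul_sum, Finset.mul_sum]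
  rw [hVx, ← Finset.sum_add_distrib]
  refine Finset.sum_congr rfl fun x _ => ?_
  have hr : ∀ a, (∑ r, (D x * (m x a * Dr x a r)) *
        ((∑ a', nu x a' * rhat x a') + (nu x a / mh x a) * (rval r - rhat x a)))
      = (D x * m x a) * ((∑ a', nu x a' * rhat x a')
          + (nu x a / mh x a) * (rstar x a - rhat x a)) := by
    intro a
    have e1 : ∀ r, (D x * (m x a * Dr x a r)) *
          ((∑ a', nu x a' * rhat x a') + (nu x a / mh x a) * (rval r - rhat x a))
        = (D x * m x a * ((∑ a', nu x a' * rhat x a')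
            - (nu x a / mh x a) * rhat x a)) * Dr x a r
          + (D x * m x a * (nu x a / mh x a)) * (Dr x a r * rval r) := fun r => by ring
    rw [Finset.sum_congr rfl fun r _ => e1 r, Finset.sum_add_distrib,
      ← Finset.mul_sum, ← Finset.mul_sum, hDr1, ← hrstar]
    ring
  rw [Finset.sum_congr rfl fun a _ => hr a]
  calc (∑ a, (D x * m x a) * ((∑ a', nu x a' * rhat x a')
          + (nu x a / mh x a) * (rstar x a - rhat x a)))
      = ∑ a, ((D x * (∑ a', nu x a' * rhat x a')) * m x a
          + D x * (nu x a * ((m x a / mh x a) * (rstar x a - rhat x a)))) :=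
        Finset.sum_congr rfl fun a _ => by ring
    _ = (D x * (∑ a', nu x a' * rhat x a')) * (∑ a, m x a)
          + ∑ a, D x * (nu x a * ((m x a / mh x a) * (rstar x a - rhat x a))) := by
        rw [Finset.sum_add_distrib, ← Finset.mul_sum]
    _ = (∑ a, D x * (nu x a * rhat x a))
          + ∑ a, D x * (nu x a * ((m x a / mh x a) * (rstar x a - rhat x a))) := by
        rw [hm1, mul_one, Finset.mul_sum]
    _ = ∑ a, (D x * (nu x a * rhat x a)
          + D x * (nu x a * ((m x a / mh x a) * (rstar x a - rhat x a)))) :=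
        Finset.sum_add_distrib.symm
    _ = ∑ a, (D x * (nu x a * rstar x a)
          + D x * (nu x a * ((1 - m x a / mh x a) * (rhat x a - rstar x a)))) :=
        Finset.sum_congr rfl fun a _ => by ring
    _ = _ := Finset.sum_add_distrib

noncomputable def DRw {X A R : Type*} [Fintype X] [Fintype A] [Fintype R] (n : ℕ)
    (D : X → ℝ) (Dr : X → A → R → ℝ)
    (mu : (k : Fin n) → (Fin k → X × A × R) → X → A → ℝ) :
    (k : ℕ) → (Fin k → X × A × R) → X × A × R → ℝ :=
  fun k h s => if hk : k < n then
    D s.1 * (mu ⟨k, hk⟩ h s.1 s.2.1 * Dr s.1 s.2.1 s.2.2)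
  else (Fintype.card (X × A × R) : ℝ)⁻¹

theorem stmt4' {X A R : Type*} [Fintype X] [Fintype A] [Fintype R]
    (n : ℕ) (hn : 0 < n)
    (D : X → ℝ) (nu : X → A → ℝ) (Dr : X → A → R → ℝ) (rval : R → ℝ)
    (rhat : X → A → ℝ)
    (mu : (k : Fin n) → (Fin k → X × A × R) → X → A → ℝ)
    (muhat : (k : Fin n) → (Fin k → X × A × R) → X → A → ℝ)
    (hD0 : ∀ x, 0 ≤ D x) (hD1 : ∑ x, D x = 1)
    (hnu0 : ∀ x a, 0 ≤ nu x a) (hnu1 : ∀ x, ∑ a, nu x a = 1)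
    (hmu0 : ∀ k h x a, 0 ≤ mu k h x a) (hmu1 : ∀ k h x, ∑ a, mu k h x a = 1)
    (hDr0 : ∀ x a r, 0 ≤ Dr x a r) (hDr1 : ∀ x a, ∑ r, Dr x a r = 1)
    (hrval0 : ∀ r, 0 ≤ rval r) (hrval1 : ∀ r, rval r ≤ 1)
    (hrhat0 : ∀ x a, 0 ≤ rhat x a) (hrhat1 : ∀ x a, rhat x a ≤ 1)
    (hmuhat : ∀ k h x a, 0 < muhat k h x a)
    (hpos : ∀ k h x a, 0 < nu x a → 0 < mu k h x a)
    (rstar : X → A → ℝ) (hrstar : ∀ x a, rstar x a = ∑ r, Dr x a r * rval r)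
    (P : (Fin n → X × A × R) → ℝ)
    (hP : ∀ z, P z = ∏ k, D (z k).1 *
      (mu k (fun i => z ⟨i.1, i.isLt.trans k.isLt⟩) (z k).1 (z k).2.1 *
        Dr (z k).1 (z k).2.1 (z k).2.2))
    (Vhatk : (k : Fin n) → (Fin k → X × A × R) → X × A × R → ℝ)
    (hVhatk : ∀ k h s, Vhatk k h s =
      (∑ a', nu s.1 a' * rhat s.1 a') +
        (nu s.1 s.2.1 / muhat k h s.1 s.2.1) * (rval s.2.2 - rhat s.1 s.2.1))
    (V : ℝ) (hV : V = ∑ x, ∑ a, ∑ r, D x * (nu x a * (Dr x a r * rval r))) :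
    (|(∑ z : Fin n → X × A × R, P z *
          ((n : ℝ)⁻¹ * ∑ k, Vhatk k (fun i => z ⟨i.1, i.isLt.trans k.isLt⟩) (z k))) - V|
      = (n : ℝ)⁻¹ * |∑ z : Fin n → X × A × R, P z *
          ∑ k : Fin n, ∑ x, ∑ a, D x * (nu x a *
            ((1 - mu k (fun i => z ⟨i.1, i.isLt.trans k.isLt⟩) x a /
                  muhat k (fun i => z ⟨i.1, i.isLt.trans k.isLt⟩) x a) *
              (rhat x a - rstar x a)))|)
    ∧ (∀ (mu1 muhat1 : X → A → ℝ),
        (∀ k h, mu k h = mu1) → (∀ k h, muhat k h = muhat1) →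
        |(∑ z : Fin n → X × A × R, P z *
            ((n : ℝ)⁻¹ * ∑ k, Vhatk k (fun i => z ⟨i.1, i.isLt.trans k.isLt⟩) (z k))) - V|
          = |∑ x, ∑ a, D x * (nu x a *
              ((1 - mu1 x a / muhat1 x a) * (rhat x a - rstar x a)))|) := by
  -- nonemptiness
  have hXne : Nonempty X := by
    by_contra h
    rw [not_nonempty_iff] at h
    rw [Finset.univ_eq_empty, Finset.sum_empty] at hD1
    exact one_ne_zero hD1.symm
  have hAne : Nonempty A := by
    by_contra h
    rw [not_nonempty_iff] at h
    have := hnu1 (Classical.arbitrary X)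
    rw [Finset.univ_eq_empty, Finset.sum_empty] at this
    exact one_ne_zero this.symm
  have hRne : Nonempty R := by
    by_contra h
    rw [not_nonempty_iff] at h
    have := hDr1 (Classical.arbitrary X) (Classical.arbitrary A)
    rw [Finset.univ_eq_empty, Finset.sum_empty] at this
    exact one_ne_zero this.symm
  have hSne : Nonempty (X × A × R) := ⟨(Classical.arbitrary X, Classical.arbitrary A,
    Classical.arbitrary R)⟩
  have hcard : (Fintype.card (X × A × R) : ℝ) ≠ 0 := by
    exact_mod_cast Fintype.card_ne_zero
  -- the weight kernel
  have hw : ∀ (k : ℕ) (h : Fin k → X × A × R), ∑ s : X × A × R, DRw n D Dr mu k h s = 1 := by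
    intro k h
    by_cases hk : k < n
    · simp only [DRw, dif_pos hk]
      rw [Fintype.sum_prod_type]
      simp only [Fintype.sum_prod_type]
      calc ∑ x, ∑ a, ∑ r, D x * (mu ⟨k, hk⟩ h x a * Dr x a r)
          = ∑ x, ∑ a, D x * mu ⟨k, hk⟩ h x a := by
            refine Finset.sum_congr rfl fun x _ => Finset.sum_congr rfl fun a _ => ?_
            rw [← Finset.mul_sum, ← Finset.mul_sum, hDr1, mul_one]
        _ = ∑ x, D x := by
            refine Finset.sum_congr rfl fun x _ => ?_
            rw [← Finset.mul_sum, hmu1, mul_one]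
        _ = 1 := hD1
    · simp only [DRw, dif_neg hk]
      rw [Finset.sum_const, Finset.card_univ, nsmul_eq_mul, mul_inv_cancel₀ hcard]
  have hPw : ∀ z, P z = DRprodW n (DRw n D Dr mu) z := by
    intro z
    rw [hP]
    unfold DRprodW
    refine Finset.prod_congr rfl fun k _ => ?_
    simp only [DRw, dif_pos k.isLt]
  have hsum1 : ∑ z : Fin n → X × A × R, P z = 1 := by
    rw [Finset.sum_congr rfl fun z _ => hPw z]
    exact DRprodW_sum n _ hw
  -- conditional single-step expectation
  have hinner : ∀ (k : Fin n) (h : Fin k.1 → X × A × R),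
      (∑ s : X × A × R, DRw n D Dr mu k.1 h s * Vhatk k h s)
      = V + ∑ x, ∑ a, D x * (nu x a *
          ((1 - mu k h x a / muhat k h x a) * (rhat x a - rstar x a))) := by
    intro k h
    have e : ∀ s : X × A × R, DRw n D Dr mu k.1 h s * Vhatk k h s
        = (D s.1 * (mu k h s.1 s.2.1 * Dr s.1 s.2.1 s.2.2)) *
          ((∑ a', nu s.1 a' * rhat s.1 a') +
            (nu s.1 s.2.1 / muhat k h s.1 s.2.1) * (rval s.2.2 - rhat s.1 s.2.1)) := by
      intro s
      simp only [DRw, dif_pos k.isLt, hVhatk]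
    rw [Finset.sum_congr rfl fun s _ => e s]
    rw [Fintype.sum_prod_type]
    simp only [Fintype.sum_prod_type]
    exact DRcore D nu Dr rval rhat (mu k h) (muhat k h) rstar hrstar (hmu1 k h) hDr1 V hV
  -- per-k expectation
  have e1 : ∀ k : Fin n,
      (∑ z : Fin n → X × A × R, P z * Vhatk k (fun i => z ⟨i.1, i.isLt.trans k.isLt⟩) (z k))
      = ∑ z : Fin n → X × A × R, P z * (V + ∑ x, ∑ a, D x * (nu x a *
          ((1 - mu k (fun i => z ⟨i.1, i.isLt.trans k.isLt⟩) x a /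
                muhat k (fun i => z ⟨i.1, i.isLt.trans k.isLt⟩) x a) *
            (rhat x a - rstar x a)))) := by
    intro k
    calc (∑ z : Fin n → X × A × R, P z * Vhatk k (fun i => z ⟨i.1, i.isLt.trans k.isLt⟩) (z k))
        = ∑ z : Fin n → X × A × R, DRprodW n (DRw n D Dr mu) z *
            Vhatk k (fun i => z ⟨i.1, i.isLt.trans k.isLt⟩) (z k) :=
          Finset.sum_congr rfl fun z _ => by rw [hPw]
      _ = ∑ z : Fin n → X × A × R, DRprodW n (DRw n D Dr mu) z *
            ∑ s : X × A × R, DRw n D Dr mu k.1 (fun i => z ⟨i.1, i.isLt.trans k.isLt⟩) s *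
              Vhatk k (fun i => z ⟨i.1, i.isLt.trans k.isLt⟩) s :=
          DRpull (DRw n D Dr mu) hw n k (Vhatk k)
      _ = _ := Finset.sum_congr rfl fun z _ => by rw [← hPw, hinner k _]
  -- total expectation
  have key : (∑ z : Fin n → X × A × R, P z *
        ∑ k, Vhatk k (fun i => z ⟨i.1, i.isLt.trans k.isLt⟩) (z k))
      = n * V + ∑ z : Fin n → X × A × R, P z *
          ∑ k : Fin n, ∑ x, ∑ a, D x * (nu x a *
            ((1 - mu k (fun i => z ⟨i.1, i.isLt.trans k.isLt⟩) x a /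
                  muhat k (fun i => z ⟨i.1, i.isLt.trans k.isLt⟩) x a) *
              (rhat x a - rstar x a))) := by
    have e0 : (∑ z : Fin n → X × A × R, P z *
          ∑ k, Vhatk k (fun i => z ⟨i.1, i.isLt.trans k.isLt⟩) (z k))
        = ∑ k : Fin n, ∑ z : Fin n → X × A × R,
            P z * Vhatk k (fun i => z ⟨i.1, i.isLt.trans k.isLt⟩) (z k) := by
      simp_rw [Finset.mul_sum]
      exact Finset.sum_comm
    rw [e0, Finset.sum_congr rfl fun k _ => e1 k, Finset.sum_comm]
    have e2 : ∀ z : Fin n → X × A × R,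
        (∑ k : Fin n, P z * (V + ∑ x, ∑ a, D x * (nu x a *
            ((1 - mu k (fun i => z ⟨i.1, i.isLt.trans k.isLt⟩) x a /
                  muhat k (fun i => z ⟨i.1, i.isLt.trans k.isLt⟩) x a) *
              (rhat x a - rstar x a)))))
        = (n : ℝ) * (P z * V) + P z * ∑ k : Fin n, ∑ x, ∑ a, D x * (nu x a *
            ((1 - mu k (fun i => z ⟨i.1, i.isLt.trans k.isLt⟩) x a /
                  muhat k (fun i => z ⟨i.1, i.isLt.trans k.isLt⟩) x a) *
              (rhat x a - rstar x a))) := by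
      intro z
      rw [Finset.mul_sum]
      rw [Finset.sum_congr rfl fun (k : Fin n) _ => mul_add (P z) V _]
      rw [Finset.sum_add_distrib, Finset.sum_const, Finset.card_univ, Fintype.card_fin,
        nsmul_eq_mul]
    rw [Finset.sum_congr rfl fun z _ => e2 z, Finset.sum_add_distrib]
    congr 1
    rw [← Finset.mul_sum, ← Finset.sum_mul, hsum1, one_mul]
  -- the estimator expectation minus V
  have hn' : (n : ℝ) ≠ 0 := Nat.cast_ne_zero.mpr hn.ne'
  have hE : (∑ z : Fin n → X × A × R, P z *
        ((n : ℝ)⁻¹ * ∑ k, Vhatk k (fun i => z ⟨i.1, i.isLt.trans k.isLt⟩) (z k))) - V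
      = (n : ℝ)⁻¹ * ∑ z : Fin n → X × A × R, P z *
          ∑ k : Fin n, ∑ x, ∑ a, D x * (nu x a *
            ((1 - mu k (fun i => z ⟨i.1, i.isLt.trans k.isLt⟩) x a /
                  muhat k (fun i => z ⟨i.1, i.isLt.trans k.isLt⟩) x a) *
              (rhat x a - rstar x a))) := by
    have : (∑ z : Fin n → X × A × R, P z *
          ((n : ℝ)⁻¹ * ∑ k, Vhatk k (fun i => z ⟨i.1, i.isLt.trans k.isLt⟩) (z k)))
        = (n : ℝ)⁻¹ * ∑ z : Fin n → X × A × R, P z *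
            ∑ k, Vhatk k (fun i => z ⟨i.1, i.isLt.trans k.isLt⟩) (z k) := by
      rw [Finset.mul_sum]
      exact Finset.sum_congr rfl fun z _ => by ring
    rw [this, key]
    field_simp
    ring
  constructor
  · rw [hE, abs_mul, abs_inv, Nat.abs_cast]
  · intro mu1 muhat1 hstat1 hstat2
    rw [hE]
    have hBconst : (∑ z : Fin n → X × A × R, P z *
          ∑ k : Fin n, ∑ x, ∑ a, D x * (nu x a *
            ((1 - mu k (fun i => z ⟨i.1, i.isLt.trans k.isLt⟩) x a /
                  muhat k (fun i => z ⟨i.1, i.isLt.trans k.isLt⟩) x a) *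
              (rhat x a - rstar x a))))
        = (n : ℝ) * ∑ x, ∑ a, D x * (nu x a *
              ((1 - mu1 x a / muhat1 x a) * (rhat x a - rstar x a))) := by
      have : ∀ z : Fin n → X × A × R,
          (∑ k : Fin n, ∑ x, ∑ a, D x * (nu x a *
            ((1 - mu k (fun i => z ⟨i.1, i.isLt.trans k.isLt⟩) x a /
                  muhat k (fun i => z ⟨i.1, i.isLt.trans k.isLt⟩) x a) *
              (rhat x a - rstar x a))))
          = (n : ℝ) * ∑ x, ∑ a, D x * (nu x a *
              ((1 - mu1 x a / muhat1 x a) * (rhat x a - rstar x a))) := by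
        intro z
        rw [Finset.sum_congr rfl fun (k : Fin n) _ => by
          rw [hstat1 k _, hstat2 k _]]
        rw [Finset.sum_const, Finset.card_univ, Fintype.card_fin, nsmul_eq_mul]
      rw [Finset.sum_congr rfl fun z _ => by rw [this z]]
      rw [← Finset.sum_mul, hsum1, one_mul]
    rw [hBconst, ← mul_assoc, inv_mul_cancel₀ hn', one_mul]

theorem stmt4 {X A R : Type*} [Fintype X] [Fintype A] [Fintype R]
    (n : ℕ) (hn : 0 < n)
    (D : X → ℝ) (nu : X → A → ℝ) (Dr : X → A → R → ℝ) (rval : R → ℝ)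
    (rhat : X → A → ℝ)
    (mu : (k : Fin n) → (Fin k → X × A × R) → X → A → ℝ)
    (muhat : (k : Fin n) → (Fin k → X × A × R) → X → A → ℝ)
    (hD0 : ∀ x, 0 ≤ D x) (hD1 : ∑ x, D x = 1)
    (hnu0 : ∀ x a, 0 ≤ nu x a) (hnu1 : ∀ x, ∑ a, nu x a = 1)
    (hmu0 : ∀ k h x a, 0 ≤ mu k h x a) (hmu1 : ∀ k h x, ∑ a, mu k h x a = 1)
    (hDr0 : ∀ x a r, 0 ≤ Dr x a r) (hDr1 : ∀ x a, ∑ r, Dr x a r = 1)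
    (hrval0 : ∀ r, 0 ≤ rval r) (hrval1 : ∀ r, rval r ≤ 1)
    (hrhat0 : ∀ x a, 0 ≤ rhat x a) (hrhat1 : ∀ x a, rhat x a ≤ 1)
    (hmuhat : ∀ k h x a, 0 < muhat k h x a)
    (hpos : ∀ k h x a, 0 < nu x a → 0 < mu k h x a)
    (rstar : X → A → ℝ) (hrstar : ∀ x a, rstar x a = ∑ r, Dr x a r * rval r)
    (P : (Fin n → X × A × R) → ℝ)
    (hP : ∀ z, P z = ∏ k, D (z k).1 *
      (mu k (fun i => z ⟨i.1, i.isLt.trans k.isLt⟩) (z k).1 (z k).2.1 *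
        Dr (z k).1 (z k).2.1 (z k).2.2))
    (Vhatk : (k : Fin n) → (Fin k → X × A × R) → X × A × R → ℝ)
    (hVhatk : ∀ k h s, Vhatk k h s =
      (∑ a', nu s.1 a' * rhat s.1 a') +
        (nu s.1 s.2.1 / muhat k h s.1 s.2.1) * (rval s.2.2 - rhat s.1 s.2.1))
    (V : ℝ) (hV : V = ∑ x, ∑ a, ∑ r, D x * (nu x a * (Dr x a r * rval r))) :
    (|(∑ z : Fin n → X × A × R, P z *
          ((n : ℝ)⁻¹ * ∑ k, Vhatk k (fun i => z ⟨i.1, i.isLt.trans k.isLt⟩) (z k))) - V|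
      = (n : ℝ)⁻¹ * |∑ z : Fin n → X × A × R, P z *
          ∑ k : Fin n, ∑ x, ∑ a, D x * (nu x a *
            ((1 - mu k (fun i => z ⟨i.1, i.isLt.trans k.isLt⟩) x a /
                  muhat k (fun i => z ⟨i.1, i.isLt.trans k.isLt⟩) x a) *
              (rhat x a - rstar x a)))|)
    ∧ (∀ (mu1 muhat1 : X → A → ℝ),
        (∀ k h, mu k h = mu1) → (∀ k h, muhat k h = muhat1) →
        |(∑ z : Fin n → X × A × R, P z *
            ((n : ℝ)⁻¹ * ∑ k, Vhatk k (fun i => z ⟨i.1, i.isLt.trans k.isLt⟩) (z k))) - V|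
          = |∑ x, ∑ a, D x * (nu x a *
              ((1 - mu1 x a / muhat1 x a) * (rhat x a - rstar x a)))|) := by
  exact stmt4' n hn D nu Dr rval rhat mu muhat hD0 hD1 hnu0 hnu1 hmu0 hmu1 hDr0 hDr1
    hrval0 hrval1 hrhat0 hrhat1 hmuhat hpos rstar hrstar P hP Vhatk hVhatk V hV
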